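/- Paths partition for even subsets of tree leaves: let T be a finite tree all of whose internal vertices have degree 3 and whose leaves are labeled bijectively by [n]. For every even subset B ⊆ [n] there exists a unique perfect matching μ of B such that the paths in T connecting the pairs of μ are pairwise edge-disjoint. -/

import Mathlib

open Finset

/-- `μ` is a perfect matching of the even subset `B ⊆ [n]`: every pair in `μ` consists of two
elements of `B` (written in increasing order), and every element of `B` lies in exactly one
pair of `μ`. -/
def IsMatchingOf {n : ℕ} (B : Finset (Fin n)) (μ : Finset (Fin n × Fin n)) : Prop :=
  (∀ q ∈ μ, q.1 < q.2 ∧ q.1 ∈ B ∧ q.2 ∈ B) ∧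
    ∀ b ∈ B, ∃! q, q ∈ μ ∧ (b = q.1 ∨ b = q.2)

/-- The paths in `G` joining the leaves labelled by the pairs of `μ` are pairwise
edge-disjoint. -/
def PathsEdgeDisjoint {V : Type*} {n : ℕ} (G : SimpleGraph V) (leaf : Fin n → V)
    (μ : Finset (Fin n × Fin n)) : Prop :=
  ∀ q ∈ μ, ∀ q' ∈ μ, q ≠ q' →
    ∀ (P : G.Path (leaf q.1) (leaf q.2)) (P' : G.Path (leaf q'.1) (leaf q'.2)),
      ∀ e, e ∈ P.1.edges → e ∉ P'.1.edges

open SimpleGraph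

set_option linter.unusedSectionVars false

section
variable {V : Type*} [Fintype V] [DecidableEq V] {G : SimpleGraph V}

lemma reach_endpoint {u v : V} : ∀ {w t : V} (p : G.Walk w t), (t = u ∨ t = v) →
    (G.deleteEdges {s(u,v)}).Reachable w u ∨ (G.deleteEdges {s(u,v)}).Reachable w v := by
  intro w t p
  induction p with
  | nil => rintro (rfl | rfl); exacts [Or.inl (Reachable.refl _), Or.inr (Reachable.refl _)]
  | @cons a c t' h p ih =>
    intro ht
    by_cases he : s(a, c) = s(u, v)
    · rw [Sym2.eq_iff] at he
      rcases he with ⟨rfl, rfl⟩ | ⟨rfl, rfl⟩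
      · exact Or.inl (Reachable.refl _)
      · exact Or.inr (Reachable.refl _)
    · have hadj : (G.deleteEdges {s(u,v)}).Adj a c := by
        rw [deleteEdges_adj]; exact ⟨h, by simpa using he⟩
      rcases ih ht with h' | h'
      · exact Or.inl (hadj.reachable.trans h')
      · exact Or.inr (hadj.reachable.trans h')

/-- In a connected graph, after deleting one edge every vertex reaches one of its endpoints. -/
lemma reach_dichotomy (hpre : G.Preconnected) {u v : V} (w : V) :
    (G.deleteEdges {s(u,v)}).Reachable w u ∨ (G.deleteEdges {s(u,v)}).Reachable w v := by
  obtain ⟨p⟩ := hpre w u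
  exact reach_endpoint p (Or.inl rfl)

lemma bridge_not_reach (hac : G.IsAcyclic) {u v : V} (h : G.Adj u v) :
    ¬ (G.deleteEdges {s(u,v)}).Reachable u v :=
  (isAcyclic_iff_forall_adj_isBridge.mp hac) h

/-- A path using the edge `s(u,v)` means its ends are not reachable in the deleted graph. -/
lemma not_reach_of_edge_mem (hac : G.IsAcyclic) {u v a b : V} (h : G.Adj u v)
    {p : G.Walk a b} (hp : p.IsPath) (he : s(u,v) ∈ p.edges) :
    ¬ (G.deleteEdges {s(u,v)}).Reachable a b := by
  induction p with
  | nil => simp at he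
  | @cons a' c b' h1 p ih =>
    rw [Walk.edges_cons, List.mem_cons] at he
    have hp' : p.IsPath := hp.of_cons
    have hnotin : s(a', c) ∉ p.edges := by
      have := hp.isTrail
      rw [Walk.isTrail_cons] at this
      exact this.2
    rcases he with he | he
    · intro hr
      have hpe : ∀ e ∈ p.edges, e ∉ ({s(u,v)} : Set (Sym2 V)) := by
        intro e hep
        simp only [Set.mem_singleton_iff]
        rintro rfl
        exact hnotin (he ▸ hep)
      have hcb : (G.deleteEdges {s(u,v)}).Reachable c b' := ⟨p.toDeleteEdges _ hpe⟩
      have hac' : (G.deleteEdges {s(u,v)}).Reachable a' c := hr.trans hcb.symm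
      rw [Sym2.eq_iff] at he
      rcases he with ⟨rfl, rfl⟩ | ⟨rfl, rfl⟩
      · exact bridge_not_reach hac h hac'
      · exact bridge_not_reach hac h hac'.symm
    · intro hr
      have hne : s(a', c) ≠ s(u, v) := fun hh => hnotin (hh ▸ he)
      have hadj : (G.deleteEdges {s(u,v)}).Adj a' c := by
        rw [deleteEdges_adj]; exact ⟨h1, by simpa using hne⟩
      exact ih hp' he (hadj.symm.reachable.trans hr)

lemma reach_of_edge_not_mem {u v a b : V} {p : G.Walk a b} (he : s(u,v) ∉ p.edges) :
    (G.deleteEdges {s(u,v)}).Reachable a b :=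
  ⟨p.toDeleteEdges _ (by intro e hep; simp only [Set.mem_singleton_iff]; rintro rfl; exact he hep)⟩

lemma edge_mem_path_iff (hac : G.IsAcyclic) {u v a b : V} (h : G.Adj u v)
    {p : G.Walk a b} (hp : p.IsPath) :
    s(u,v) ∈ p.edges ↔ ¬ (G.deleteEdges {s(u,v)}).Reachable a b := by
  constructor
  · exact fun he => not_reach_of_edge_mem hac h hp he
  · intro hr
    by_contra hne
    exact hr (reach_of_edge_not_mem hne)

end

section Main
open scoped Classical

variable {V : Type*} [Fintype V] [DecidableEq V] (G : SimpleGraph V)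
  {n : ℕ} (leaf : Fin n → V) (B : Finset (Fin n))

lemma del_swap (u v : V) :
    G.deleteEdges {s(u,v)} = G.deleteEdges {s(v,u)} := by rw [Sym2.eq_swap]

noncomputable def sideCt (u v : V) : ℕ :=
  (B.filter (fun i => (G.deleteEdges {s(u,v)}).Reachable (leaf i) u)).card

def OddE (u v : V) : Prop := G.Adj u v ∧ Odd (sideCt G leaf B u v)

variable {G leaf B}

lemma reach_side_iff (hT : G.IsTree) {u v : V} (h : G.Adj u v) (w : V) :
    (G.deleteEdges {s(u,v)}).Reachable w v ↔ ¬ (G.deleteEdges {s(u,v)}).Reachable w u := by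
  constructor
  · intro hv hu
    exact (isAcyclic_iff_forall_adj_isBridge.mp hT.IsAcyclic) h (hu.symm.trans hv)
  · intro hu
    rcases reach_dichotomy hT.isConnected.preconnected w (u := u) (v := v) with h' | h'
    · exact absurd h' hu
    · exact h'

lemma sideCt_add (hT : G.IsTree) {u v : V} (h : G.Adj u v) :
    sideCt G leaf B u v + sideCt G leaf B v u = B.card := by
  have h2 : (B.filter (fun i => (G.deleteEdges {s(v,u)}).Reachable (leaf i) v)).card
      = (B.filter (fun i => ¬ (G.deleteEdges {s(u,v)}).Reachable (leaf i) u)).card := by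
    simp only [del_swap G v u]
    congr 1
    apply Finset.filter_congr
    intro i _
    exact reach_side_iff hT h _
  unfold sideCt
  rw [h2]
  exact Finset.card_filter_add_card_filter_not _

lemma OddE_symm' (hT : G.IsTree) (hB : Even B.card) {u v : V} (h : OddE G leaf B u v) :
    OddE G leaf B v u := by
  refine ⟨h.1.symm, ?_⟩
  have hadd := sideCt_add (leaf := leaf) (B := B) hT h.1
  rcases Nat.even_or_odd (sideCt G leaf B v u) with he | ho
  · exfalso
    have hodd : Odd (B.card) := by rw [← hadd]; exact h.2.add_even he
    rw [Nat.odd_iff, Nat.even_iff.mp hB] at hodd; simp at hodd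
  · exact ho

lemma Odd_sideCt_comm (hT : G.IsTree) (hB : Even B.card) {u v : V} (h : G.Adj u v) :
    Odd (sideCt G leaf B u v) ↔ Odd (sideCt G leaf B v u) :=
  ⟨fun h' => (OddE_symm' hT hB ⟨h, h'⟩).2, fun h' => (OddE_symm' hT hB ⟨h.symm, h'⟩).2⟩

variable (G leaf B) in
def HG (hT : G.IsTree) (hB : Even B.card) : SimpleGraph V where
  Adj := OddE G leaf B
  symm := ⟨fun u v h => OddE_symm' hT hB h⟩
  loopless := ⟨fun v h => G.loopless.irrefl v h.1⟩

variable (hT : G.IsTree) (hB : Even B.card)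

lemma HG_adj {u v : V} (h : (HG G leaf B hT hB).Adj u v) : G.Adj u v := h.1

lemma HG_le : HG G leaf B hT hB ≤ G := fun u v h => h.1

end Main

section Main2
open scoped Classical

variable {V : Type*} [Fintype V] [DecidableEq V] {G : SimpleGraph V} [DecidableRel G.Adj]
  {n : ℕ} {leaf : Fin n → V} {B : Finset (Fin n)}
lemma deg_HG_leaf (hT : G.IsTree) (hB : Even B.card) (hinj : Function.Injective leaf) {i : Fin n} {w₀ : V}
    (hnb : G.neighborFinset (leaf i) = {w₀}) :
    (HG G leaf B hT hB).degree (leaf i) = if i ∈ B then 1 else 0 := by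
  have hiso : ∀ z : V, (G.deleteEdges {s(leaf i, w₀)}).Reachable (leaf i) z → z = leaf i := by
    intro z hz
    obtain ⟨p⟩ := hz
    cases p with
    | nil => rfl
    | @cons _ c _ h1 p =>
      exfalso
      rw [SimpleGraph.deleteEdges_adj] at h1
      have hc : c ∈ G.neighborFinset (leaf i) := by rw [mem_neighborFinset]; exact h1.1
      rw [hnb, Finset.mem_singleton] at hc
      exact h1.2 (by rw [hc]; rfl)
  have hside : sideCt G leaf B (leaf i) w₀ = if i ∈ B then 1 else 0 := by
    unfold sideCt
    have hcg : ∀ j ∈ B, ((G.deleteEdges {s(leaf i, w₀)}).Reachable (leaf j) (leaf i) ↔ j = i) := by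
      intro j _
      constructor
      · intro hr; exact hinj (hiso _ hr.symm)
      · rintro rfl; exact Reachable.refl _
    convert_to (B.filter (fun j => j = i)).card = _ using 2
    · convert Finset.filter_congr hcg using 2
    rw [Finset.filter_eq']
    split <;> simp
  have hnbH : (HG G leaf B hT hB).neighborFinset (leaf i) = if i ∈ B then {w₀} else ∅ := by
    ext w
    rw [mem_neighborFinset]
    constructor
    · intro hw
      have hwnb : w ∈ G.neighborFinset (leaf i) := by rw [mem_neighborFinset]; exact hw.1
      rw [hnb, Finset.mem_singleton] at hwnb
      subst hwnb
      have hodd := hw.2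
      rw [hside] at hodd
      by_cases hi : i ∈ B
      · simp [hi]
      · rw [if_neg hi] at hodd; simp [Nat.odd_iff] at hodd
    · intro hw
      by_cases hi : i ∈ B
      · rw [if_pos hi, Finset.mem_singleton] at hw
        subst hw
        refine ⟨?_, ?_⟩
        · rw [← mem_neighborFinset, hnb]; simp
        · rw [hside, if_pos hi]; exact odd_one
      · rw [if_neg hi] at hw; simp at hw
  show ((HG G leaf B hT hB).neighborFinset (leaf i)).card = _
  rw [hnbH]
  split <;> simp

/-- For `x ≠ v` there is exactly one neighbor `w` of `v` with `x` on the `w`-side. -/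
lemma side_of_ne (hT : G.IsTree) {x v : V} (hxv : x ≠ v) :
    ∃ w, G.Adj v w ∧ (G.deleteEdges {s(v,w)}).Reachable x w ∧
      ∀ w', G.Adj v w' → w' ≠ w → ¬ (G.deleteEdges {s(v,w')}).Reachable x w' := by
  have main : ∀ (r : G.Walk v x), r.IsPath →
      ∃ w, G.Adj v w ∧ (G.deleteEdges {s(v,w)}).Reachable x w ∧
        ∀ w', G.Adj v w' → w' ≠ w → ¬ (G.deleteEdges {s(v,w')}).Reachable x w' := by
    intro r hr
    cases r with
    | nil => exact absurd rfl hxv.symm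
    | @cons _ w _ h t =>
      rw [Walk.cons_isPath_iff] at hr
      obtain ⟨ht, hv⟩ := hr
      have hvE : ∀ z : V, s(v, z) ∉ t.edges := fun z hz =>
        hv (t.fst_mem_support_of_mem_edges hz)
      refine ⟨w, h, ?_, ?_⟩
      · apply reach_of_edge_not_mem
        rw [Walk.edges_reverse, List.mem_reverse]
        exact hvE w
      · intro w' hw' hne hreach
        have hxv' : (G.deleteEdges {s(v,w')}).Reachable x v := by
          apply reach_of_edge_not_mem (p := t.reverse.concat h.symm)
          rw [Walk.edges_concat, List.concat_eq_append, List.mem_append]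
          rintro (hh | hh)
          · rw [Walk.edges_reverse, List.mem_reverse] at hh
            exact hvE w' hh
          · rw [List.mem_singleton, Sym2.eq_iff] at hh
            rcases hh with ⟨h1, h2⟩ | ⟨h1, h2⟩
            · exact G.loopless.irrefl v (h1 ▸ h)
            · exact hne h2
        exact bridge_not_reach hT.IsAcyclic hw' (hxv'.symm.trans hreach)
  obtain ⟨p0⟩ := hT.isConnected.preconnected x v
  exact main p0.toPath.1.reverse (p0.toPath.2.reverse)

lemma card_sum_sides (hT : G.IsTree) {v : V} (hv : ∀ i, leaf i ≠ v) :
    ∑ w ∈ G.neighborFinset v, sideCt G leaf B w v = B.card := by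
  have hex : ∀ i : Fin n, ∃ w, G.Adj v w ∧ (G.deleteEdges {s(v,w)}).Reachable (leaf i) w ∧
      ∀ w', G.Adj v w' → w' ≠ w → ¬ (G.deleteEdges {s(v,w')}).Reachable (leaf i) w' :=
    fun i => side_of_ne hT (hv i)
  set f : Fin n → V := fun i => (hex i).choose with hf
  have hmem : ∀ i ∈ B, f i ∈ G.neighborFinset v := by
    intro i _
    rw [mem_neighborFinset]
    exact (hex i).choose_spec.1
  rw [eq_comm]
  rw [Finset.card_eq_sum_card_fiberwise hmem]
  apply Finset.sum_congr rfl
  intro w hw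
  rw [mem_neighborFinset] at hw
  unfold sideCt
  congr 1
  convert Finset.filter_congr ?_ using 1
  intro i _
  rw [del_swap G w v]
  constructor
  · rintro rfl
    exact (hex i).choose_spec.2.1
  · intro hr
    by_contra hne
    exact (hex i).choose_spec.2.2 w hw (Ne.symm (by simpa using hne)) hr

lemma deg_HG_even (hT : G.IsTree) (hB : Even B.card) {v : V} (hv : ∀ i, leaf i ≠ v) :
    (HG G leaf B hT hB).degree v % 2 = 0 := by
  have hnbH : (HG G leaf B hT hB).neighborFinset v
      = (G.neighborFinset v).filter (fun w => Odd (sideCt G leaf B w v)) := by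
    ext w
    rw [mem_neighborFinset, Finset.mem_filter, mem_neighborFinset]
    constructor
    · intro hw
      exact ⟨hw.1, (Odd_sideCt_comm hT hB hw.1).mp hw.2⟩
    · intro hw
      exact ⟨hw.1, (Odd_sideCt_comm hT hB hw.1).mpr hw.2⟩
  have : (HG G leaf B hT hB).degree v
      = ∑ w ∈ G.neighborFinset v, if Odd (sideCt G leaf B w v) then 1 else 0 := by
    show ((HG G leaf B hT hB).neighborFinset v).card = _
    rw [hnbH, Finset.card_filter]
  rw [this, Finset.sum_nat_mod]
  have hpt : ∀ w ∈ G.neighborFinset v,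
      (if Odd (sideCt G leaf B w v) then 1 else 0) % 2 = sideCt G leaf B w v % 2 := by
    intro w _
    by_cases ho : Odd (sideCt G leaf B w v)
    · rw [if_pos ho, Nat.odd_iff.mp ho]
    · rw [if_neg ho, Nat.even_iff.mp (Nat.not_odd_iff_even.mp ho)]
  rw [Finset.sum_congr rfl hpt, ← Finset.sum_nat_mod, card_sum_sides hT hv]
  exact Nat.even_iff.mp hB

end Main2

section Main3
open scoped Classical

variable {V : Type*} [Fintype V] [DecidableEq V] {G : SimpleGraph V} [DecidableRel G.Adj]
  {n : ℕ} {leaf : Fin n → V} {B : Finset (Fin n)}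

lemma deg_HG_le_two (hT : G.IsTree) (hB : Even B.card)
    (hdeg : ∀ v : V, G.degree v = 1 ∨ G.degree v = 3)
    (hleaf1 : ∀ i, G.degree (leaf i) = 1) (hinj : Function.Injective leaf)
    (hsurj : ∀ v : V, G.degree v = 1 → ∃ i, leaf i = v) (v : V) :
    (HG G leaf B hT hB).degree v ≤ 2 := by
  rcases hdeg v with h1 | h3
  · obtain ⟨i, rfl⟩ := hsurj v h1
    obtain ⟨w₀, hnb⟩ := Finset.card_eq_one.mp (h1 : (G.neighborFinset (leaf i)).card = 1)
    rw [deg_HG_leaf hT hB hinj hnb]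
    split <;> omega
  · have hv : ∀ i, leaf i ≠ v := by
      intro i hiv
      have := hleaf1 i
      rw [hiv, h3] at this
      omega
    have heven := deg_HG_even hT hB hv
    have hle : (HG G leaf B hT hB).degree v ≤ G.degree v := by
      apply Finset.card_le_card
      intro w hw
      rw [mem_neighborFinset] at *
      exact hw.1
    rw [h3] at hle
    omega

lemma deg_HG_one_leafB (hT : G.IsTree) (hB : Even B.card)
    (hdeg : ∀ v : V, G.degree v = 1 ∨ G.degree v = 3)
    (hleaf1 : ∀ i, G.degree (leaf i) = 1) (hinj : Function.Injective leaf)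
    (hsurj : ∀ v : V, G.degree v = 1 → ∃ i, leaf i = v) {y : V}
    (hy : (HG G leaf B hT hB).degree y = 1) : ∃ j, leaf j = y ∧ j ∈ B := by
  rcases hdeg y with h1 | h3
  · obtain ⟨i, rfl⟩ := hsurj y h1
    obtain ⟨w₀, hnb⟩ := Finset.card_eq_one.mp (h1 : (G.neighborFinset (leaf i)).card = 1)
    rw [deg_HG_leaf hT hB hinj hnb] at hy
    by_cases hi : i ∈ B
    · exact ⟨i, rfl, hi⟩
    · rw [if_neg hi] at hy; omega
  · exfalso
    have hv : ∀ i, leaf i ≠ y := by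
      intro i hiv
      have := hleaf1 i
      rw [hiv, h3] at this
      omega
    have heven := deg_HG_even hT hB hv
    rw [hy] at heven
    omega

/-- In a graph of max degree two, from a degree-one vertex, maximal-path endpoints agree. -/
lemma follow {H : SimpleGraph V} (hdeg2 : ∀ v, H.degree v ≤ 2) :
    ∀ {a y : V} (p : H.Walk a y), p.IsPath → H.degree y = 1 →
      ∀ {z : V} (q : H.Walk a z), q.IsPath → H.degree z = 1 →
        ∀ x, H.Adj x a → x ∉ p.support → x ∉ q.support → y = z := by
  intro a y p
  induction p with
  | nil =>
    rename_i w
    intro hp hy z q hq hz x hxa hxp hxq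
    cases q with
    | nil => rfl
    | @cons _ b _ hab q' =>
      exfalso
      have hxb : x ≠ b := by
        intro hh
        subst hh
        rw [Walk.support_cons] at hxq
        exact hxq (List.mem_cons_of_mem _ q'.start_mem_support)
      have hsub : ({x, b} : Finset V) ⊆ H.neighborFinset w := by
        intro c hc
        rw [mem_neighborFinset]
        rcases Finset.mem_insert.mp hc with rfl | hc
        · exact hxa.symm
        · rw [Finset.mem_singleton] at hc; exact hc ▸ hab
      have h2 := Finset.card_le_card hsub
      rw [Finset.card_pair hxb] at h2
      have hdg : H.degree w = (H.neighborFinset w).card := rfl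
      rw [← hdg, hy] at h2
      omega
  | @cons a b y hab p' ih =>
    intro hp hy z q hq hz x hxa hxp hxq
    rw [Walk.cons_isPath_iff] at hp
    have hxb : x ≠ b := by
      intro hh
      subst hh
      rw [Walk.support_cons] at hxp
      exact hxp (List.mem_cons_of_mem _ p'.start_mem_support)
    cases q with
    | nil =>
      exfalso
      have hsub : ({x, b} : Finset V) ⊆ H.neighborFinset a := by
        intro c hc
        rw [mem_neighborFinset]
        rcases Finset.mem_insert.mp hc with rfl | hc
        · exact hxa.symm
        · rw [Finset.mem_singleton] at hc; exact hc ▸ hab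
      have h2 := Finset.card_le_card hsub
      rw [Finset.card_pair hxb] at h2
      have hdg : H.degree a = (H.neighborFinset a).card := rfl
      rw [← hdg, hz] at h2
      omega
    | @cons _ b' _ hab' q' =>
      rw [Walk.cons_isPath_iff] at hq
      have hxb' : x ≠ b' := by
        intro hh
        subst hh
        rw [Walk.support_cons] at hxq
        exact hxq (List.mem_cons_of_mem _ q'.start_mem_support)
      have hbb' : b' = b := by
        by_contra hne
        have hsub : ({x, b, b'} : Finset V) ⊆ H.neighborFinset a := by
          intro c hc
          rw [mem_neighborFinset]
          rcases Finset.mem_insert.mp hc with rfl | hc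
          · exact hxa.symm
          rcases Finset.mem_insert.mp hc with rfl | hc
          · exact hab
          · rw [Finset.mem_singleton] at hc; exact hc ▸ hab'
        have h3 := Finset.card_le_card hsub
        have hcard : ({x, b, b'} : Finset V).card = 3 := by
          rw [Finset.card_insert_of_notMem (by simp [hxb, hxb']),
            Finset.card_pair (fun hh => hne hh.symm)]
        rw [hcard] at h3
        have hdg : H.degree a = (H.neighborFinset a).card := rfl
        have := hdeg2 a
        rw [hdg] at this
        omega
      subst hbb'
      exact ih hp.1 hy q' hq.1 hz a hab hp.2 hq.2

/-- From a vertex entered along an edge, a maximal path reaches a degree-one vertex. -/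
lemma extend {H : SimpleGraph V} (hT : G.IsTree) (hle : H ≤ G)
    (hdeg2 : ∀ v, H.degree v ≤ 2) :
    ∀ (L : ℕ) {x pred a : V} (q : H.Walk pred x), q.IsPath → H.Adj a pred →
      a ∉ q.support → Fintype.card V ≤ q.length + L →
      ∃ y, y ≠ x ∧ H.degree y = 1 ∧ H.Reachable x y := by
  intro L
  induction L with
  | zero =>
    intro x pred a q hq hadj ha hcard
    exfalso
    have hP : (Walk.cons hadj q).IsPath := by rw [Walk.cons_isPath_iff]; exact ⟨hq, ha⟩
    have := hP.length_lt
    rw [Walk.length_cons] at this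
    omega
  | succ L ih =>
    intro x pred a q hq hadj ha hcard
    by_cases hd : H.degree a = 1
    · refine ⟨a, ?_, hd, ⟨(Walk.cons hadj q).reverse⟩⟩
      intro hh
      rw [hh] at ha
      exact ha q.end_mem_support
    · have hpmem : pred ∈ H.neighborFinset a := by rw [mem_neighborFinset]; exact hadj
      have hd1 : 1 ≤ (H.neighborFinset a).card := Finset.card_pos.mpr ⟨pred, hpmem⟩
      have hdg : H.degree a = (H.neighborFinset a).card := rfl
      have hd2 : H.degree a = 2 := by have := hdeg2 a; omega
      have hexb : ∃ b ∈ H.neighborFinset a, b ≠ pred := by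
        by_contra h'
        push_neg at h'
        have hsub : H.neighborFinset a ⊆ {pred} := fun c hc =>
          Finset.mem_singleton.mpr (h' c hc)
        have := Finset.card_le_card hsub
        rw [Finset.card_singleton] at this
        omega
      obtain ⟨b, hbnb, hbpred⟩ := hexb
      have hab : H.Adj a b := by rw [mem_neighborFinset] at hbnb; exact hbnb
      by_cases hbs : b ∈ (Walk.cons hadj q).support
      · exfalso
        have hba : b ≠ a := hab.ne'
        have hbq : b ∈ q.support := by
          rw [Walk.support_cons] at hbs
          rcases List.mem_cons.mp hbs with hh | hh
          · exact absurd hh hba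
          · exact hh
        have ht : (q.takeUntil b hbq).IsPath := hq.takeUntil hbq
        have hat : a ∉ (q.takeUntil b hbq).support := fun hc =>
          ha (Walk.support_takeUntil_subset _ hbq hc)
        have hW1 : (Walk.cons hadj (q.takeUntil b hbq)).IsPath := by
          rw [Walk.cons_isPath_iff]; exact ⟨ht, hat⟩
        have hlen : 1 ≤ (q.takeUntil b hbq).length := by
          rcases Nat.eq_zero_or_pos (q.takeUntil b hbq).length with h0 | h0
          · exact absurd (Walk.eq_of_length_eq_zero h0).symm hbpred
          · exact h0
        have hWedges : ∀ e ∈ (Walk.cons hadj (q.takeUntil b hbq)).edges, e ∈ G.edgeSet :=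
          fun e he => edgeSet_mono hle (Walk.edges_subset_edgeSet _ he)
        have hP1path : ((Walk.cons hadj (q.takeUntil b hbq)).transfer G hWedges).IsPath :=
          hW1.transfer hWedges
        have hP2 : G.Adj a b := hle hab
        have huniq := hT.IsAcyclic.path_unique
          ⟨(Walk.cons hadj (q.takeUntil b hbq)).transfer G hWedges, hP1path⟩ (Path.singleton hP2)
        have hlens := congrArg (fun p : G.Path a b => p.1.length) huniq
        simp only [Path.singleton] at hlens
        rw [Walk.length_transfer, Walk.length_cons] at hlens
        simp [Walk.length_cons] at hlens
        exact hbpred hlens.symm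
      · refine ih (q := Walk.cons hadj q) ?_ hab.symm hbs ?_
        · rw [Walk.cons_isPath_iff]; exact ⟨hq, ha⟩
        · rw [Walk.length_cons]; omega

end Main3

section Main4
open scoped Classical

variable {V : Type*} [Fintype V] [DecidableEq V] {G : SimpleGraph V} [DecidableRel G.Adj]
  {n : ℕ} {leaf : Fin n → V} {B : Finset (Fin n)}

lemma partner_exists (hT : G.IsTree) (hB : Even B.card)
    (hdeg : ∀ v : V, G.degree v = 1 ∨ G.degree v = 3)
    (hleaf1 : ∀ i, G.degree (leaf i) = 1) (hinj : Function.Injective leaf)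
    (hsurj : ∀ v : V, G.degree v = 1 → ∃ i, leaf i = v) {i : Fin n} (hi : i ∈ B) :
    ∃ j, j ≠ i ∧ j ∈ B ∧ (HG G leaf B hT hB).Reachable (leaf i) (leaf j) := by
  obtain ⟨w₀, hnb⟩ := Finset.card_eq_one.mp ((hleaf1 i) : (G.neighborFinset (leaf i)).card = 1)
  have hdi : (HG G leaf B hT hB).degree (leaf i) = 1 := by
    rw [deg_HG_leaf hT hB hinj hnb, if_pos hi]
  have hpos : 0 < ((HG G leaf B hT hB).neighborFinset (leaf i)).card := by
    have hdg : (HG G leaf B hT hB).degree (leaf i)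
        = ((HG G leaf B hT hB).neighborFinset (leaf i)).card := rfl
    omega
  obtain ⟨a₀, ha₀m⟩ := Finset.card_pos.mp hpos
  rw [mem_neighborFinset] at ha₀m
  obtain ⟨y, hyx, hy1, hreach⟩ := extend hT (HG_le hT hB)
    (deg_HG_le_two hT hB hdeg hleaf1 hinj hsurj) (Fintype.card V)
    (q := (Walk.nil : (HG G leaf B hT hB).Walk (leaf i) (leaf i)))
    Walk.IsPath.nil ha₀m.symm (by simp [ha₀m.ne']) (by simp)
  obtain ⟨j, rfl, hjB⟩ := deg_HG_one_leafB hT hB hdeg hleaf1 hinj hsurj hy1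
  exact ⟨j, fun hh => hyx (by rw [hh]), hjB, hreach⟩

lemma partner_unique (hT : G.IsTree) (hB : Even B.card)
    (hdeg : ∀ v : V, G.degree v = 1 ∨ G.degree v = 3)
    (hleaf1 : ∀ i, G.degree (leaf i) = 1) (hinj : Function.Injective leaf)
    (hsurj : ∀ v : V, G.degree v = 1 → ∃ i, leaf i = v) {i j k : Fin n}
    (hi : i ∈ B) (hjB : j ∈ B) (hkB : k ∈ B) (hj : j ≠ i) (hk : k ≠ i)
    (hrj : (HG G leaf B hT hB).Reachable (leaf i) (leaf j))
    (hrk : (HG G leaf B hT hB).Reachable (leaf i) (leaf k)) : j = k := by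
  set H := HG G leaf B hT hB with hH
  have hdeg2 : ∀ v, H.degree v ≤ 2 := deg_HG_le_two hT hB hdeg hleaf1 hinj hsurj
  have hdi : H.degree (leaf i) = 1 := by
    obtain ⟨w₀, hnb⟩ := Finset.card_eq_one.mp ((hleaf1 i) : (G.neighborFinset (leaf i)).card = 1)
    rw [hH, deg_HG_leaf hT hB hinj hnb, if_pos hi]
  have hdj : H.degree (leaf j) = 1 := by
    obtain ⟨w₀, hnb⟩ := Finset.card_eq_one.mp ((hleaf1 j) : (G.neighborFinset (leaf j)).card = 1)
    rw [hH, deg_HG_leaf hT hB hinj hnb, if_pos hjB]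
  have hdk : H.degree (leaf k) = 1 := by
    obtain ⟨w₀, hnb⟩ := Finset.card_eq_one.mp ((hleaf1 k) : (G.neighborFinset (leaf k)).card = 1)
    rw [hH, deg_HG_leaf hT hB hinj hnb, if_pos hkB]
  have main : ∀ (p : H.Walk (leaf i) (leaf j)) (q : H.Walk (leaf i) (leaf k)),
      p.IsPath → q.IsPath → j = k := by
    intro p q hp hq
    have hpn : ¬ p.Nil := by
      intro hnil
      exact hj (hinj (Walk.eq_of_length_eq_zero (Walk.nil_iff_length_eq.mp hnil)).symm)
    have hqn : ¬ q.Nil := by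
      intro hnil
      exact hk (hinj (Walk.eq_of_length_eq_zero (Walk.nil_iff_length_eq.mp hnil)).symm)
    obtain ⟨a, h1, t1, rfl⟩ := Walk.not_nil_iff.mp hpn
    obtain ⟨a', h1', t1', rfl⟩ := Walk.not_nil_iff.mp hqn
    have haa : a' = a := by
      by_contra hne
      have hsub : ({a, a'} : Finset V) ⊆ H.neighborFinset (leaf i) := by
        intro c hc
        rw [mem_neighborFinset]
        rcases Finset.mem_insert.mp hc with rfl | hc
        · exact h1
        · rw [Finset.mem_singleton] at hc; exact hc ▸ h1'
      have h2 := Finset.card_le_card hsub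
      rw [Finset.card_pair (fun hh => hne hh.symm)] at h2
      have hdg : H.degree (leaf i) = (H.neighborFinset (leaf i)).card := rfl
      rw [← hdg, hdi] at h2
      omega
    subst haa
    rw [Walk.cons_isPath_iff] at hp hq
    exact hinj (follow hdeg2 t1 hp.1 hdj t1' hq.1 hdk (leaf i) h1 hp.2 hq.2)
  obtain ⟨w1⟩ := hrj
  obtain ⟨w2⟩ := hrk
  exact main w1.toPath w2.toPath w1.toPath.2 w2.toPath.2

/-- If the ends of a `G`-path are `H`-reachable for a subgraph `H` of the tree `G`, then the
path's edges all lie in `H`. -/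
lemma path_edges_subset (hT : G.IsTree) {H : SimpleGraph V} (hle : H ≤ G) {a b : V}
    (hr : H.Reachable a b) (P : G.Path a b) : ∀ e ∈ P.1.edges, e ∈ H.edgeSet := by
  obtain ⟨w⟩ := hr
  have hWedges : ∀ e ∈ w.toPath.1.edges, e ∈ G.edgeSet :=
    fun e he => edgeSet_mono hle (Walk.edges_subset_edgeSet _ he)
  have huniq := hT.IsAcyclic.path_unique P ⟨w.toPath.1.transfer G hWedges, w.toPath.2.transfer hWedges⟩
  intro e he
  rw [huniq] at he
  simp only [Walk.edges_transfer] at he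
  exact Walk.edges_subset_edgeSet _ he

lemma reach_of_edge_mem_walk {H : SimpleGraph V} {a b u v : V} (w : H.Walk a b)
    (he : s(u,v) ∈ w.edges) : H.Reachable a u :=
  ⟨w.takeUntil u (w.fst_mem_support_of_mem_edges he)⟩

lemma matching_parity (hT : G.IsTree) {μ : Finset (Fin n × Fin n)} (hm : IsMatchingOf B μ)
    {u v : V} (h : G.Adj u v) :
    (μ.filter (fun r => ¬ (G.deleteEdges {s(u,v)}).Reachable (leaf r.1) (leaf r.2))).card % 2
      = sideCt G leaf B u v % 2 := by
  set sd : Fin n → Prop := fun i => (G.deleteEdges {s(u,v)}).Reachable (leaf i) u with hsd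
  have hcover : B = μ.biUnion (fun r => ({r.1, r.2} : Finset (Fin n))) := by
    ext b
    simp only [Finset.mem_biUnion, Finset.mem_insert, Finset.mem_singleton]
    constructor
    · intro hb
      obtain ⟨r, ⟨hrμ, hbr⟩, _⟩ := hm.2 b hb
      exact ⟨r, hrμ, hbr⟩
    · rintro ⟨r, hrμ, rfl | rfl⟩
      exacts [(hm.1 r hrμ).2.1, (hm.1 r hrμ).2.2]
  have hdisj : ∀ r ∈ μ, ∀ r' ∈ μ, r ≠ r' →
      Disjoint ({r.1, r.2} : Finset (Fin n)) ({r'.1, r'.2} : Finset (Fin n)) := by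
    intro r hr r' hr' hne
    rw [Finset.disjoint_left]
    intro b hb hb'
    simp only [Finset.mem_insert, Finset.mem_singleton] at hb hb'
    have hbB : b ∈ B := by
      rcases hb with rfl | rfl
      exacts [(hm.1 r hr).2.1, (hm.1 r hr).2.2]
    obtain ⟨r₀, _, hu⟩ := hm.2 b hbB
    have e1 := hu r ⟨hr, hb⟩
    have e2 := hu r' ⟨hr', hb'⟩
    exact hne (e1.symm ▸ e2.symm ▸ rfl)
  have h1 : sideCt G leaf B u v = ∑ r ∈ μ, (({r.1, r.2} : Finset (Fin n)).filter sd).card := by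
    unfold sideCt
    rw [hcover, Finset.filter_biUnion, Finset.card_biUnion]
    swap
    intro r hr r' hr' hne
    convert Finset.disjoint_filter_filter (p := fun i => (G.deleteEdges {s(u,v)}).Reachable (leaf i) u)
      (q := fun i => (G.deleteEdges {s(u,v)}).Reachable (leaf i) u) (hdisj r hr r' hr' hne)
    convert rfl
  have hx : ∀ r : Fin n × Fin n, r ∈ μ →
      ((¬ (G.deleteEdges {s(u,v)}).Reachable (leaf r.1) (leaf r.2)) ↔
        ((sd r.1 ∧ ¬ sd r.2) ∨ (¬ sd r.1 ∧ sd r.2))) := by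
    intro r _
    constructor
    · intro hcr
      by_cases hs1 : sd r.1 <;> by_cases hs2 : sd r.2
      · exact absurd (hs1.trans hs2.symm) hcr
      · exact Or.inl ⟨hs1, hs2⟩
      · exact Or.inr ⟨hs1, hs2⟩
      · exfalso
        have hv1 : (G.deleteEdges {s(u,v)}).Reachable (leaf r.1) v :=
          (reach_side_iff hT h _).mpr hs1
        have hv2 : (G.deleteEdges {s(u,v)}).Reachable (leaf r.2) v :=
          (reach_side_iff hT h _).mpr hs2
        exact hcr (hv1.trans hv2.symm)
    · rintro (⟨hs1, hs2⟩ | ⟨hs1, hs2⟩) hreach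
      · exact hs2 (hreach.symm.trans hs1)
      · exact hs1 (hreach.trans hs2)
  have h2 : ∀ r ∈ μ, (({r.1, r.2} : Finset (Fin n)).filter sd).card % 2
      = (if ¬ (G.deleteEdges {s(u,v)}).Reachable (leaf r.1) (leaf r.2) then 1 else 0) % 2 := by
    intro r hr
    have hne12 : r.1 ≠ r.2 := ne_of_lt (hm.1 r hr).1
    by_cases hs1 : sd r.1 <;> by_cases hs2 : sd r.2
    · rw [if_neg (by rw [hx r hr]; simp [hs1, hs2])]
      simp [Finset.filter_insert, Finset.filter_singleton, hs1, hs2, hne12]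
    · rw [if_pos (by rw [hx r hr]; exact Or.inl ⟨hs1, hs2⟩)]
      simp [Finset.filter_insert, Finset.filter_singleton, hs1, hs2]
    · rw [if_pos (by rw [hx r hr]; exact Or.inr ⟨hs1, hs2⟩)]
      simp [Finset.filter_insert, Finset.filter_singleton, hs1, hs2]
    · rw [if_neg (by rw [hx r hr]; simp [hs1, hs2])]
      simp [Finset.filter_insert, Finset.filter_singleton, hs1, hs2]
  calc (μ.filter (fun r => ¬ (G.deleteEdges {s(u,v)}).Reachable (leaf r.1) (leaf r.2))).card % 2
      = (∑ r ∈ μ, if ¬ (G.deleteEdges {s(u,v)}).Reachable (leaf r.1) (leaf r.2) then 1 else 0) % 2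
        := by rw [Finset.card_filter]
    _ = (∑ r ∈ μ, (if ¬ (G.deleteEdges {s(u,v)}).Reachable (leaf r.1) (leaf r.2) then 1 else 0) % 2) % 2
        := by rw [Finset.sum_nat_mod]
    _ = (∑ r ∈ μ, (({r.1, r.2} : Finset (Fin n)).filter sd).card % 2) % 2
        := by rw [Finset.sum_congr rfl (fun r hr => (h2 r hr).symm)]
    _ = (∑ r ∈ μ, (({r.1, r.2} : Finset (Fin n)).filter sd).card) % 2
        := by rw [← Finset.sum_nat_mod]
    _ = sideCt G leaf B u v % 2 := by rw [← h1]

end Main4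

set_option maxHeartbeats 2000000
open scoped Classical

/-- let `T` be a finite tree all of whose vertices have degree `1` or `3`,
with leaves (the degree-`1` vertices) labelled bijectively by `[n]`. Then every even subset
`B ⊆ [n]` admits a unique perfect matching `μ` whose connecting paths in `T` are pairwise
edge-disjoint. -/
theorem stmt18 {V : Type*} [Fintype V] [DecidableEq V] (G : SimpleGraph V)
    [DecidableRel G.Adj] (hT : G.IsTree)
    (hdeg : ∀ v : V, G.degree v = 1 ∨ G.degree v = 3)
    (n : ℕ) (leaf : Fin n → V) (hleaf1 : ∀ i, G.degree (leaf i) = 1)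
    (hinj : Function.Injective leaf)
    (hsurj : ∀ v : V, G.degree v = 1 → ∃ i, leaf i = v)
    (B : Finset (Fin n)) (hB : Even B.card) :
    ∃! μ : Finset (Fin n × Fin n),
      IsMatchingOf B μ ∧ PathsEdgeDisjoint G leaf μ := by
  set μ₀ := Finset.univ.filter (fun q : Fin n × Fin n =>
      q.1 < q.2 ∧ q.1 ∈ B ∧ q.2 ∈ B ∧ (HG G leaf B hT hB).Reachable (leaf q.1) (leaf q.2)) with hμ₀
  have hmem : ∀ q : Fin n × Fin n, q ∈ μ₀ ↔
      (q.1 < q.2 ∧ q.1 ∈ B ∧ q.2 ∈ B ∧ (HG G leaf B hT hB).Reachable (leaf q.1) (leaf q.2)) := by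
    intro q
    rw [hμ₀, Finset.mem_filter]
    simp
  have hpu : ∀ {i j k : Fin n}, i ∈ B → j ∈ B → k ∈ B → j ≠ i → k ≠ i →
      (HG G leaf B hT hB).Reachable (leaf i) (leaf j) → (HG G leaf B hT hB).Reachable (leaf i) (leaf k) → j = k :=
    fun hi hjB hkB hj hk hrj hrk =>
      partner_unique hT hB hdeg hleaf1 hinj hsurj hi hjB hkB hj hk hrj hrk
  have hmatch : IsMatchingOf B μ₀ := by
    constructor
    · intro q hq
      have hh := (hmem q).mp hq
      exact ⟨hh.1, hh.2.1, hh.2.2.1⟩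
    · intro b hb
      obtain ⟨j, hjne, hjB, hjr⟩ := partner_exists hT hB hdeg hleaf1 hinj hsurj hb
      rcases lt_or_gt_of_ne (show b ≠ j from fun hh => hjne hh.symm) with hlt | hgt
      · refine ⟨(b, j), ⟨(hmem _).mpr ⟨hlt, hb, hjB, hjr⟩, Or.inl rfl⟩, ?_⟩
        rintro q' ⟨hq', hbq'⟩
        have hq'p := (hmem q').mp hq'
        rcases hbq' with hb1 | hb2
        · have h2j : q'.2 = j := by
            apply hpu hb hq'p.2.2.1 hjB ?_ hjne ?_ hjr
            · rw [hb1]; exact ne_of_gt hq'p.1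
            · rw [hb1]; exact hq'p.2.2.2
          have : q' = (q'.1, q'.2) := rfl
          rw [this, ← hb1, h2j]
        · exfalso
          have h1j : q'.1 = j := by
            apply hpu hb hq'p.2.1 hjB ?_ hjne ?_ hjr
            · rw [hb2]; exact ne_of_lt hq'p.1
            · rw [hb2]; exact hq'p.2.2.2.symm
          rw [← h1j] at hlt
          rw [hb2] at hlt
          exact lt_irrefl _ (hlt.trans hq'p.1)
      · refine ⟨(j, b), ⟨(hmem _).mpr ⟨hgt, hjB, hb, hjr.symm⟩, Or.inr rfl⟩, ?_⟩
        rintro q' ⟨hq', hbq'⟩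
        have hq'p := (hmem q').mp hq'
        rcases hbq' with hb1 | hb2
        · exfalso
          have h2j : q'.2 = j := by
            apply hpu hb hq'p.2.2.1 hjB ?_ hjne ?_ hjr
            · rw [hb1]; exact ne_of_gt hq'p.1
            · rw [hb1]; exact hq'p.2.2.2
          rw [← h2j] at hgt
          rw [hb1] at hgt
          exact lt_irrefl _ (hgt.trans hq'p.1)
        · have h1j : q'.1 = j := by
            apply hpu hb hq'p.2.1 hjB ?_ hjne ?_ hjr
            · rw [hb2]; exact ne_of_lt hq'p.1
            · rw [hb2]; exact hq'p.2.2.2.symm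
          have : q' = (q'.1, q'.2) := rfl
          rw [this, ← hb2, h1j]
  have hdisjoint : PathsEdgeDisjoint G leaf μ₀ := by
    intro q hq q' hq' hne P P' e he he'
    have hqp := (hmem q).mp hq
    have hq'p := (hmem q').mp hq'
    have hsub := path_edges_subset hT (HG_le hT hB) hqp.2.2.2 P
    have hsub' := path_edges_subset hT (HG_le hT hB) hq'p.2.2.2 P'
    have heW : e ∈ (P.1.transfer (HG G leaf B hT hB) hsub).edges := by rw [Walk.edges_transfer]; exact he
    have heW' : e ∈ (P'.1.transfer (HG G leaf B hT hB) hsub').edges := by rw [Walk.edges_transfer]; exact he'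
    clear he he'
    revert heW heW'
    induction e using Sym2.ind with
    | _ u v =>
      intro heW heW'
      have r1 : (HG G leaf B hT hB).Reachable (leaf q.1) u := reach_of_edge_mem_walk _ heW
      have r2 : (HG G leaf B hT hB).Reachable (leaf q'.1) u := reach_of_edge_mem_walk _ heW'
      have r12 : (HG G leaf B hT hB).Reachable (leaf q.1) (leaf q'.1) := r1.trans r2.symm
      by_cases h11 : q.1 = q'.1
      · have h22 : q.2 = q'.2 := by
          apply hpu hqp.2.1 hqp.2.2.1 (show q'.2 ∈ B from hq'p.2.2.1)
            (ne_of_gt hqp.1) ?_ hqp.2.2.2 ?_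
          · rw [← h11] at hq'p
            exact ne_of_gt hq'p.1
          · rw [h11]; exact hq'p.2.2.2
        exact hne (Prod.ext h11 h22)
      · have e1 : q.2 = q'.1 := hpu hqp.2.1 hqp.2.2.1 hq'p.2.1 (ne_of_gt hqp.1)
          (Ne.symm h11) hqp.2.2.2 r12
        have e2 : q'.2 = q.1 := hpu hq'p.2.1 hq'p.2.2.1 hqp.2.1 (ne_of_gt hq'p.1)
          h11 hq'p.2.2.2 r12.symm
        have hlt1 : q.1 < q'.2 := by rw [← e1] at hq'p; exact hqp.1.trans hq'p.1
        rw [e2] at hlt1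
        exact absurd hlt1 (lt_irrefl _)
  refine ⟨μ₀, ⟨hmatch, hdisjoint⟩, ?_⟩
  rintro μ' ⟨hm', hd'⟩
  have hsubμ : μ' ⊆ μ₀ := by
    intro q hq
    have hq1 := hm'.1 q hq
    set P : G.Path (leaf q.1) (leaf q.2) := (hT.isConnected.preconnected _ _).some.toPath with hP
    have hedges : ∀ e ∈ P.1.edges, e ∈ (HG G leaf B hT hB).edgeSet := by
      intro e he
      revert he
      induction e using Sym2.ind with
      | _ u v =>
        intro he
        have hadj : G.Adj u v := P.1.adj_of_mem_edges he
        have hcrossq : ¬ (G.deleteEdges {s(u,v)}).Reachable (leaf q.1) (leaf q.2) :=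
          not_reach_of_edge_mem hT.IsAcyclic hadj P.2 he
        have hfil : μ'.filter
            (fun r => ¬ (G.deleteEdges {s(u,v)}).Reachable (leaf r.1) (leaf r.2)) = {q} := by
          apply Finset.eq_singleton_iff_unique_mem.mpr
          constructor
          · exact Finset.mem_filter.mpr ⟨hq, hcrossq⟩
          · intro r hr
            rw [Finset.mem_filter] at hr
            by_contra hrq
            set Pr : G.Path (leaf r.1) (leaf r.2) :=
              (hT.isConnected.preconnected _ _).some.toPath with hPr
            have her : s(u,v) ∈ Pr.1.edges := by
              by_contra hno
              exact hr.2 (reach_of_edge_not_mem hno)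
            exact hd' q hq r hr.1 (fun hh => hrq (by rw [hh])) P Pr (s(u,v)) he her
        have hodd : Odd (sideCt G leaf B u v) := by
          have hp := matching_parity (leaf := leaf) hT hm' hadj
          rw [hfil, Finset.card_singleton] at hp
          rw [Nat.odd_iff]
          omega
        exact (mem_edgeSet _).mpr ⟨hadj, hodd⟩
    have hreach : (HG G leaf B hT hB).Reachable (leaf q.1) (leaf q.2) := ⟨P.1.transfer (HG G leaf B hT hB) hedges⟩
    exact (hmem q).mpr ⟨hq1.1, hq1.2.1, hq1.2.2, hreach⟩
  apply Finset.Subset.antisymm hsubμ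
  intro q hq
  have hq1 := (hmem q).mp hq
  obtain ⟨r, ⟨hrμ', hbr⟩, _⟩ := hm'.2 q.1 hq1.2.1
  have hrμ₀ : r ∈ μ₀ := hsubμ hrμ'
  obtain ⟨r₀, hr₀, hu₀⟩ := hmatch.2 q.1 hq1.2.1
  have e1 := hu₀ q ⟨hq, Or.inl rfl⟩
  have e2 := hu₀ r ⟨hrμ₀, hbr⟩
  rw [show q = r from e1.trans e2.symm]
  exact hrμ'
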